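/- Let Θ ⊆ ℝ^{d_β} × ℝ^{d_π} be closed, π_0 ∈ ℝ^{d_π}, and let B^W = {β : (β, π_0) ∈ Θ}. Suppose B^W equals the closure of {β : (β, π_0) ∈ int(Θ)}. Let π_n → π_0 with √n(π_n − π_0) bounded (or more generally π_n any sequence with π_n → π_0). Then the sets Λ_n^W = {(β, √n(π − π_n)) : (β, π) ∈ Θ} converge in the Painlevé–Kuratowski sense to B^W × ℝ^{d_π}. -/

import Mathlib

open Filter Topology Set Metric

/-- The Painlevé–Kuratowski limsup of a sequence of sets:
points whose distance to `A n` has liminf zero. -/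
def pkLimsup {H : Type*} [PseudoEMetricSpace H] (A : ℕ → Set H) : Set H :=
  {h | Filter.atTop.liminf (fun n => EMetric.infEdist h (A n)) = 0}

/-- The Painlevé–Kuratowski liminf of a sequence of sets:
points whose distance to `A n` tends to zero. -/
def pkLiminf {H : Type*} [PseudoEMetricSpace H] (A : ℕ → Set H) : Set H :=
  {h | Tendsto (fun n => EMetric.infEdist h (A n)) atTop (𝓝 0)}

/-- Painlevé–Kuratowski convergence: limsup and liminf both equal the limit set. -/
def PKTendsto {H : Type*} [PseudoEMetricSpace H] (A : ℕ → Set H) (L : Set H) : Prop :=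
  pkLimsup A = L ∧ pkLiminf A = L

/-- Weak-identification scaling of the parameter space. If `Θ` is closed,
`B^W = {β : (β,π₀) ∈ Θ}` equals the closure of `{β : (β,π₀) ∈ int Θ}`, and `π_n → π₀`,
then `Λ_n^W = {(β, √n(π − π_n)) : (β,π) ∈ Θ} → B^W × ℝ^{d_π}` in the PK sense. -/
theorem pk_weak_id_scaling {dβ dπ : ℕ}
    (Θ : Set ((Fin dβ → ℝ) × (Fin dπ → ℝ))) (hΘ : IsClosed Θ)
    (π₀ : Fin dπ → ℝ)
    (hBW : {β : Fin dβ → ℝ | (β, π₀) ∈ Θ}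
      = closure {β : Fin dβ → ℝ | (β, π₀) ∈ interior Θ})
    (πn : ℕ → (Fin dπ → ℝ)) (hπn : Tendsto πn atTop (𝓝 π₀)) :
    PKTendsto
      (fun n : ℕ =>
        {p : (Fin dβ → ℝ) × (Fin dπ → ℝ) |
          ∃ q ∈ Θ, p = (q.1, Real.sqrt n • (q.2 - πn n))})
      ({β : Fin dβ → ℝ | (β, π₀) ∈ Θ} ×ˢ (Set.univ : Set (Fin dπ → ℝ))) := by
  set Λ : ℕ → Set ((Fin dβ → ℝ) × (Fin dπ → ℝ)) :=
    fun n => {p | ∃ q ∈ Θ, p = (q.1, Real.sqrt n • (q.2 - πn n))} with hΛ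
  have hsqrt : Tendsto (fun n : ℕ => Real.sqrt n) atTop atTop := by
    rw [Filter.tendsto_atTop]
    intro b
    filter_upwards [tendsto_natCast_atTop_atTop.eventually_ge_atTop ((max b 0)^2)] with n hn
    calc b ≤ max b 0 := le_max_left _ _
      _ = Real.sqrt ((max b 0)^2) := by rw [Real.sqrt_sq (le_max_right _ _)]
      _ ≤ Real.sqrt n := Real.sqrt_le_sqrt hn
  -- key1: liminf inclusion
  have key1 : ∀ (β : Fin dβ → ℝ) (v : Fin dπ → ℝ), (β, π₀) ∈ Θ →
      Tendsto (fun n => EMetric.infEdist ((β, v)) (Λ n)) atTop (𝓝 0) := by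
    intro β v hβ
    rw [ENNReal.tendsto_nhds_zero]
    intro ε hε
    obtain ⟨ε', hε'pos, hε'le⟩ : ∃ ε' : ℝ, 0 < ε' ∧ ENNReal.ofReal ε' ≤ ε := by
      refine ⟨(min ε 1).toReal, ?_, ?_⟩
      · rw [ENNReal.toReal_pos_iff]
        exact ⟨lt_min hε one_pos, lt_of_le_of_lt (min_le_right _ _) ENNReal.one_lt_top⟩
      · rw [ENNReal.ofReal_toReal (by exact ne_top_of_le_ne_top ENNReal.one_ne_top (min_le_right _ _))]
        exact min_le_left _ _
    have hβc : β ∈ closure {β : Fin dβ → ℝ | (β, π₀) ∈ interior Θ} := hBW ▸ hβ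
    rw [Metric.mem_closure_iff] at hβc
    obtain ⟨β', hβ', hd⟩ := hβc ε' hε'pos
    obtain ⟨δ, hδ, hball⟩ := Metric.isOpen_iff.1 isOpen_interior (β', π₀) hβ'
    have hev1 : ∀ᶠ n in atTop, dist (πn n) π₀ < δ/2 :=
      hπn (Metric.ball_mem_nhds _ (by positivity))
    have hev2 : ∀ᶠ n : ℕ in atTop, ‖v‖ / Real.sqrt n < δ/2 :=
      (Tendsto.div_atTop tendsto_const_nhds hsqrt).eventually_lt_const (by positivity)
    have hev3 : ∀ᶠ n : ℕ in atTop, (1:ℝ) ≤ Real.sqrt n := hsqrt.eventually_ge_atTop 1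
    filter_upwards [hev1, hev2, hev3] with n h1 h2 h3
    have hs0 : Real.sqrt n ≠ 0 := by linarith
    set p := πn n + (Real.sqrt n)⁻¹ • v with hp
    have hdist : dist p (πn n) = ‖v‖ / Real.sqrt n := by
      rw [dist_eq_norm]
      simp only [hp, add_sub_cancel_left, norm_smul, norm_inv, Real.norm_eq_abs,
        abs_of_nonneg (Real.sqrt_nonneg _), inv_mul_eq_div]
    have hpΘ : (β', p) ∈ Θ := by
      apply interior_subset (hball _)
      rw [mem_ball, Prod.dist_eq]
      simp only [dist_self]
      refine max_lt (by positivity) ?_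
      calc dist p π₀ ≤ dist p (πn n) + dist (πn n) π₀ := dist_triangle _ _ _
        _ < δ/2 + δ/2 := by rw [hdist]; exact add_lt_add h2 h1
        _ = δ := by ring
    have hmem : (β', v) ∈ Λ n := by
      refine ⟨(β', p), hpΘ, ?_⟩
      simp only [hp, Prod.mk.injEq, true_and]
      rw [add_sub_cancel_left, smul_smul, mul_inv_cancel₀ hs0, one_smul]
    calc EMetric.infEdist ((β, v)) (Λ n) ≤ edist ((β, v)) ((β', v)) :=
          EMetric.infEdist_le_edist_of_mem hmem
      _ = edist β β' := by rw [Prod.edist_eq]; simp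
      _ ≤ ε := by
          rw [edist_dist]
          exact le_trans (ENNReal.ofReal_le_ofReal hd.le) hε'le
  -- key2: limsup inclusion
  have key2 : ∀ (β : Fin dβ → ℝ) (v : Fin dπ → ℝ),
      atTop.liminf (fun n => EMetric.infEdist ((β, v)) (Λ n)) = 0 → (β, π₀) ∈ Θ := by
    intro β v h
    by_contra hc
    obtain ⟨ε, hε, hball⟩ := Metric.isOpen_iff.1 hΘ.isOpen_compl (β, π₀) hc
    have hev1 : ∀ᶠ n in atTop, dist (πn n) π₀ < ε/4 :=
      hπn (Metric.ball_mem_nhds _ (by positivity))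
    have hev2 : ∀ᶠ n : ℕ in atTop, (‖v‖ + ε) / Real.sqrt n < ε/4 :=
      (Tendsto.div_atTop tendsto_const_nhds hsqrt).eventually_lt_const (by positivity)
    have hev3 : ∀ᶠ n : ℕ in atTop, (1:ℝ) ≤ Real.sqrt n := hsqrt.eventually_ge_atTop 1
    have hev : ∀ᶠ n in atTop,
        ENNReal.ofReal (ε/2) ≤ EMetric.infEdist ((β, v)) (Λ n) := by
      filter_upwards [hev1, hev2, hev3] with n h1 h2 h3
      refine EMetric.le_infEdist.2 ?_
      rintro ⟨b, w⟩ ⟨⟨b', q⟩, hq, heq⟩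
      simp only [Prod.mk.injEq] at heq
      obtain ⟨rfl, rfl⟩ := heq
      by_contra hlt
      push_neg at hlt
      rw [edist_lt_ofReal, Prod.dist_eq, max_lt_iff] at hlt
      obtain ⟨hd1, hd2⟩ := hlt
      have hspos : (0:ℝ) < Real.sqrt n := by linarith
      have hnq : ‖q - πn n‖ ≤ (‖v‖ + ε/2) / Real.sqrt n := by
        rw [le_div_iff₀ hspos]
        have : ‖Real.sqrt n • (q - πn n)‖ ≤ ‖v‖ + ε/2 := by
          have := norm_sub_norm_le (Real.sqrt n • (q - πn n)) v
          rw [← dist_eq_norm, dist_comm] at this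
          simp only [Prod.snd] at hd2
          nlinarith [this, hd2]
        calc ‖q - πn n‖ * Real.sqrt n = ‖Real.sqrt n • (q - πn n)‖ := by
              rw [norm_smul, Real.norm_eq_abs, abs_of_pos hspos]; ring
          _ ≤ ‖v‖ + ε/2 := this
      have hqπ₀ : dist q π₀ < ε := by
        calc dist q π₀ ≤ dist q (πn n) + dist (πn n) π₀ := dist_triangle _ _ _
          _ ≤ (‖v‖ + ε/2) / Real.sqrt n + ε/4 := by
              rw [dist_eq_norm]; exact add_le_add hnq h1.le
          _ ≤ (‖v‖ + ε) / Real.sqrt n + ε/4 := by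
              gcongr; linarith
          _ < ε/4 + ε/4 := by linarith
          _ < ε := by linarith
      have hbβ : dist b β < ε := by
        rw [dist_comm]
        calc dist β b = dist (β, v).1 (b, Real.sqrt n • (q - πn n)).1 := rfl
          _ < ε/2 := hd1
          _ < ε := by linarith
      have : (b, q) ∈ Metric.ball ((β, π₀)) ε := by
        rw [mem_ball, Prod.dist_eq]
        exact max_lt hbβ hqπ₀
      exact hball this hq
    have hge : ENNReal.ofReal (ε/2) ≤
        atTop.liminf (fun n => EMetric.infEdist ((β, v)) (Λ n)) :=
      le_liminf_of_le (by isBoundedDefault) hev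
    rw [h] at hge
    simp only [nonpos_iff_eq_zero, ENNReal.ofReal_eq_zero] at hge
    linarith
  constructor
  · ext ⟨β, v⟩
    simp only [pkLimsup, mem_setOf_eq, mem_prod, mem_univ, and_true]
    exact ⟨key2 β v, fun h => (key1 β v h).liminf_eq⟩
  · ext ⟨β, v⟩
    simp only [pkLiminf, mem_setOf_eq, mem_prod, mem_univ, and_true]
    exact ⟨fun h => key2 β v h.liminf_eq, key1 β v⟩
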